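/- Fix an integer r ≥ 1 and integers ν₁,…,ν_r. Say that a family (A_d)_{d∈ℕ^r} of complex Laurent polynomials A_d ∈ ℂ[ℏ, ℏ⁻¹] belongs to the class 𝒪_deg^{ℏ,ℏ⁻¹} if there exist constants B, C > 0 such that sup_{|ℏ|=1} |A_d(ℏ)| ≤ B·C^{|d|}/⟨ν,d⟩! whenever ⟨ν,d⟩ ≥ 0 and sup_{|ℏ|=1} |A_d(ℏ)| ≤ B·C^{|d|}·(−⟨ν,d⟩)! whenever ⟨ν,d⟩ ≤ 0. Then 𝒪_deg^{ℏ,ℏ⁻¹} is closed under the Cauchy product: if (A_d) and (B_d) belong to the class, so does (Σ_{d₁+d₂=d} A_{d₁} B_{d₂})_d; hence 𝒪_deg^{ℏ,ℏ⁻¹} is a subring of the ring of formal power series in q₁,…,q_r with coefficients in ℂ[ℏ,ℏ⁻¹]. -/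

import Mathlib

open scoped BigOperators

/-- Evaluation of a complex Laurent polynomial at a (nonzero) complex number. -/
noncomputable def laurentEval (f : LaurentPolynomial ℂ) (z : ℂ) : ℂ :=
  Finsupp.sum (AddMonoidAlgebra.coeff f : ℤ →₀ ℂ) fun n c => c * z ^ n

/-- Membership in the class `𝒪_deg^{ℏ,ℏ⁻¹}`: a family of Laurent polynomials `(A_d)_{d ∈ ℕ^r}`
belongs to the class if there are `B, C > 0` with
`sup_{|ℏ|=1} |A_d(ℏ)| ≤ B C^{|d|}/⟨ν,d⟩!` when `⟨ν,d⟩ ≥ 0` and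
`sup_{|ℏ|=1} |A_d(ℏ)| ≤ B C^{|d|} (-⟨ν,d⟩)!` when `⟨ν,d⟩ ≤ 0`. -/
def MemODeg (r : ℕ) (ν : Fin r → ℤ) (A : (Fin r → ℕ) → LaurentPolynomial ℂ) : Prop :=
  ∃ B C : ℝ, 0 < B ∧ 0 < C ∧ ∀ (d : Fin r → ℕ) (z : ℂ), ‖z‖ = 1 →
    (0 ≤ ∑ a, ν a * (d a : ℤ) →
      ‖laurentEval (A d) z‖
        ≤ B * C ^ (∑ a, d a) / (Nat.factorial (∑ a, ν a * (d a : ℤ)).toNat : ℝ)) ∧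
    ((∑ a, ν a * (d a : ℤ)) ≤ 0 →
      ‖laurentEval (A d) z‖
        ≤ B * C ^ (∑ a, d a) * (Nat.factorial (∑ a, ν a * (d a : ℤ)).natAbs : ℝ))

/-- The Cauchy product `(A · B)_d = ∑_{d₁ + d₂ = d} A_{d₁} B_{d₂}` of two families of Laurent
polynomials (product in `ℂ[ℏ, ℏ⁻¹]`). -/
noncomputable def cauchyProdL (r : ℕ) (A B : (Fin r → ℕ) → LaurentPolynomial ℂ)
    (d : Fin r → ℕ) : LaurentPolynomial ℂ :=
  ∑ x ∈ Fintype.piFinset (fun i => Finset.range (d i + 1)),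
    A x * B (fun i => d i - x i)

/-! ### Auxiliary machinery -/

noncomputable def laurentEvalHom (z : ℂ) (hz : z ≠ 0) : LaurentPolynomial ℂ →+* ℂ :=
  AddMonoidAlgebra.liftNCRingHom (RingHom.id ℂ)
    ((Units.coeHom ℂ).comp (zpowersHom ℂˣ (Units.mk0 z hz))) (fun _ _ => Commute.all _ _)

lemma laurentEvalHom_apply (z : ℂ) (hz : z ≠ 0) (f : LaurentPolynomial ℂ) :
    laurentEvalHom z hz f = laurentEval f z := by
  unfold laurentEvalHom laurentEval
  rw [AddMonoidAlgebra.liftNCRingHom]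
  show AddMonoidAlgebra.liftNC _ _ f = _
  erw [AddMonoidAlgebra.liftNC, AddMonoidHom.comp_apply, Finsupp.liftAddHom_apply, Finsupp.sum]
  rw [Finsupp.sum]
  refine Finset.sum_congr rfl fun n _ => ?_
  simp [Units.val_zpow_eq_zpow_val]

lemma fact_add_le (a b : ℕ) : (a + b).factorial ≤ 2 ^ (a + b) * (a.factorial * b.factorial) := by
  have h1 : (a + b).choose b ≤ 2 ^ (a + b) := by
    calc (a + b).choose b ≤ ∑ k ∈ Finset.range (a + b + 1), (a + b).choose k :=
          Finset.single_le_sum (fun _ _ => Nat.zero_le _) (Finset.mem_range.2 (by omega))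
      _ = 2 ^ (a + b) := Nat.sum_range_choose _
  calc (a + b).factorial = (a + b).choose b * a.factorial * b.factorial := by
        rw [Nat.add_choose_mul_factorial_mul_factorial]
    _ ≤ 2 ^ (a + b) * a.factorial * b.factorial :=
        Nat.mul_le_mul_right _ (Nat.mul_le_mul_right _ h1)
    _ = 2 ^ (a + b) * (a.factorial * b.factorial) := by ring

lemma fact_mul_le (a b : ℕ) : a.factorial * b.factorial ≤ (a + b).factorial :=
  Nat.le_of_dvd (Nat.factorial_pos _) (Nat.factorial_mul_factorial_dvd_factorial_add a b)

noncomputable def gdeg (m : ℤ) : ℝ :=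
  if 0 ≤ m then ((Nat.factorial m.toNat : ℝ))⁻¹ else (Nat.factorial m.natAbs : ℝ)

lemma gdeg_pos (m : ℤ) : 0 < gdeg m := by
  unfold gdeg; split <;> positivity

lemma R1 (a b : ℕ) : (a.factorial : ℝ) * b.factorial ≤ (a + b).factorial := by
  exact_mod_cast fact_mul_le a b

lemma R2 (a b : ℕ) : ((a + b).factorial : ℝ) ≤ 2 ^ (a + b) * (a.factorial * b.factorial) := by
  exact_mod_cast fact_add_le a b

lemma gdeg_mul_le_aux (m₁ m₂ : ℤ) (h1 : 0 ≤ m₁) :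
    gdeg m₁ * gdeg m₂ ≤ 2 ^ (m₁.natAbs + m₂.natAbs) * gdeg (m₁ + m₂) := by
  by_cases h2 : 0 ≤ m₂
  · have h3 : 0 ≤ m₁ + m₂ := by omega
    have e : (m₁ + m₂).toNat = m₁.toNat + m₂.toNat := by omega
    have e1 : m₁.natAbs = m₁.toNat := by omega
    have e2 : m₂.natAbs = m₂.toNat := by omega
    simp only [gdeg, if_pos h1, if_pos h2, if_pos h3, e, e1, e2]
    set a := m₁.toNat; set b := m₂.toNat
    have h := R2 a b
    rw [show ((a.factorial : ℝ))⁻¹ * ((b.factorial : ℝ))⁻¹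
          = 1 / (a.factorial * b.factorial) by rw [one_div, mul_inv],
        show (2:ℝ) ^ (a + b) * (((a + b).factorial : ℝ))⁻¹
          = 2 ^ (a + b) / ((a + b).factorial) by rw [div_eq_mul_inv],
        div_le_div_iff₀ (by positivity) (by positivity)]
    nlinarith
  · by_cases h3 : 0 ≤ m₁ + m₂
    · have e1 : m₁.natAbs = m₁.toNat := by omega
      simp only [gdeg, if_pos h1, if_neg h2, if_pos h3, e1]
      set a := m₁.toNat with ha
      set b := m₂.natAbs with hb
      set m := (m₁ + m₂).toNat with hm
      have key : a = m + b := by omega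
      have h := R1 m b
      rw [← key] at h
      have hp : (1:ℝ) ≤ 2 ^ (a + b) := one_le_pow₀ one_le_two
      rw [show ((a.factorial : ℝ))⁻¹ * (b.factorial : ℝ)
            = (b.factorial : ℝ) / a.factorial by rw [div_eq_mul_inv, mul_comm],
          show (2:ℝ) ^ (a + b) * ((m.factorial : ℝ))⁻¹
            = 2 ^ (a + b) / m.factorial by rw [div_eq_mul_inv],
          div_le_div_iff₀ (by positivity) (by positivity)]
      nlinarith [Nat.factorial_pos a, (by positivity : (0:ℝ) < a.factorial)]
    · have e1 : m₁.natAbs = m₁.toNat := by omega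
      simp only [gdeg, if_pos h1, if_neg h2, if_neg h3, e1]
      set a := m₁.toNat with ha
      set b := m₂.natAbs with hb
      set m := (m₁ + m₂).natAbs with hm
      have key : b = a + m := by omega
      have h := R2 a m
      rw [← key] at h
      have hpow : (2:ℝ) ^ b ≤ 2 ^ (a + b) :=
        pow_le_pow_right₀ one_le_two (by omega)
      rw [show ((a.factorial : ℝ))⁻¹ * (b.factorial : ℝ)
            = (b.factorial : ℝ) / a.factorial by rw [div_eq_mul_inv, mul_comm],
          show (2:ℝ) ^ (a + b) * (m.factorial : ℝ)
            = 2 ^ (a + b) * m.factorial / 1 by rw [div_one],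
          div_le_div_iff₀ (by positivity) (by positivity)]
      have hfa : (0:ℝ) < a.factorial := by positivity
      have hfm : (0:ℝ) < m.factorial := by positivity
      nlinarith [mul_le_mul_of_nonneg_right hpow
        (by positivity : (0:ℝ) ≤ (a.factorial : ℝ) * m.factorial)]

lemma gdeg_mul_le (m₁ m₂ : ℤ) :
    gdeg m₁ * gdeg m₂ ≤ 2 ^ (m₁.natAbs + m₂.natAbs) * gdeg (m₁ + m₂) := by
  by_cases h1 : 0 ≤ m₁
  · exact gdeg_mul_le_aux m₁ m₂ h1
  · by_cases h2 : 0 ≤ m₂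
    · have := gdeg_mul_le_aux m₂ m₁ h2
      rw [mul_comm (gdeg m₂), Nat.add_comm, add_comm m₂] at this
      exact this
    · have h3 : ¬ 0 ≤ m₁ + m₂ := by omega
      simp only [gdeg, if_neg h1, if_neg h2, if_neg h3]
      have key : (m₁ + m₂).natAbs = m₁.natAbs + m₂.natAbs := by omega
      rw [key]
      have h := R1 m₁.natAbs m₂.natAbs
      have hp : (1:ℝ) ≤ 2 ^ (m₁.natAbs + m₂.natAbs) := one_le_pow₀ one_le_two
      nlinarith [(by positivity : (0:ℝ) < ((m₁.natAbs + m₂.natAbs).factorial : ℝ))]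

lemma natAbs_sum_le {α : Type*} (s : Finset α) (f : α → ℤ) :
    (∑ i ∈ s, f i).natAbs ≤ ∑ i ∈ s, (f i).natAbs := by
  induction s using Finset.cons_induction with
  | empty => simp
  | cons a s ha ih =>
      rw [Finset.sum_cons, Finset.sum_cons]
      exact le_trans (Int.natAbs_add_le _ _) (by omega)

lemma gbound_of_mem {r : ℕ} {ν : Fin r → ℤ} {A : (Fin r → ℕ) → LaurentPolynomial ℂ}
    (h : MemODeg r ν A) :
    ∃ B C : ℝ, 0 < B ∧ 0 < C ∧ ∀ (d : Fin r → ℕ) (z : ℂ), ‖z‖ = 1 →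
      ‖laurentEval (A d) z‖
        ≤ B * C ^ (∑ a, d a) * gdeg (∑ a, ν a * (d a : ℤ)) := by
  obtain ⟨B, C, hB, hC, h⟩ := h
  refine ⟨B, C, hB, hC, fun d z hz => ?_⟩
  rcases le_or_gt 0 (∑ a, ν a * (d a : ℤ)) with hm | hm
  · rw [gdeg, if_pos hm, ← div_eq_mul_inv]
    exact (h d z hz).1 hm
  · rw [gdeg, if_neg (by omega)]
    exact (h d z hz).2 hm.le

lemma mem_of_gbound {r : ℕ} {ν : Fin r → ℤ} {A : (Fin r → ℕ) → LaurentPolynomial ℂ}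
    {B C : ℝ} (hB : 0 < B) (hC : 0 < C)
    (h : ∀ (d : Fin r → ℕ) (z : ℂ), ‖z‖ = 1 →
      ‖laurentEval (A d) z‖
        ≤ B * C ^ (∑ a, d a) * gdeg (∑ a, ν a * (d a : ℤ))) :
    MemODeg r ν A := by
  refine ⟨B, C, hB, hC, fun d z hz => ⟨fun hm => ?_, fun hm => ?_⟩⟩
  · have := h d z hz
    rw [gdeg, if_pos hm, ← div_eq_mul_inv] at this
    exact this
  · rcases lt_or_eq_of_le hm with hm' | hm'
    · have := h d z hz
      rw [gdeg, if_neg (by omega)] at this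
      exact this
    · have := h d z hz
      rw [hm'] at this ⊢
      simpa [gdeg] using this


/-- The class `𝒪_deg^{ℏ,ℏ⁻¹}` is closed under the Cauchy product (and under
addition); hence it is a subring of the ring of formal power series in `q₁, …, q_r` with
coefficients in `ℂ[ℏ, ℏ⁻¹]`. -/
theorem memODeg_subring (r : ℕ) (hr : 1 ≤ r) (ν : Fin r → ℤ)
    (A B : (Fin r → ℕ) → LaurentPolynomial ℂ)
    (hA : MemODeg r ν A) (hB : MemODeg r ν B) :
    MemODeg r ν (fun d => A d + B d) ∧ MemODeg r ν (cauchyProdL r A B) := by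
  obtain ⟨B₁, C₁, hB₁, hC₁, h₁⟩ := gbound_of_mem hA
  obtain ⟨B₂, C₂, hB₂, hC₂, h₂⟩ := gbound_of_mem hB
  set M : ℕ := ∑ a, (ν a).natAbs with hM
  constructor
  · refine mem_of_gbound (B := B₁ + B₂) (C := C₁ + C₂) (by positivity) (by positivity) ?_
    intro d z hz
    have hz0 : z ≠ 0 := fun h => by simp [h] at hz
    set n := ∑ a, d a
    set m := ∑ a, ν a * (d a : ℤ)
    have hadd : laurentEval (A d + B d) z = laurentEval (A d) z + laurentEval (B d) z := by
      rw [← laurentEvalHom_apply z hz0, ← laurentEvalHom_apply z hz0,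
        ← laurentEvalHom_apply z hz0, map_add]
    calc ‖laurentEval (A d + B d) z‖
        ≤ ‖laurentEval (A d) z‖ + ‖laurentEval (B d) z‖ := by
          rw [hadd]; exact norm_add_le _ _
      _ ≤ B₁ * C₁ ^ n * gdeg m + B₂ * C₂ ^ n * gdeg m :=
          add_le_add (h₁ d z hz) (h₂ d z hz)
      _ = (B₁ * C₁ ^ n + B₂ * C₂ ^ n) * gdeg m := by ring
      _ ≤ ((B₁ + B₂) * (C₁ + C₂) ^ n) * gdeg m := by
          refine mul_le_mul_of_nonneg_right ?_ (gdeg_pos m).le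
          have p1 : C₁ ^ n ≤ (C₁ + C₂) ^ n := pow_le_pow_left₀ hC₁.le (by linarith) n
          have p2 : C₂ ^ n ≤ (C₁ + C₂) ^ n := pow_le_pow_left₀ hC₂.le (by linarith) n
          nlinarith
      _ = (B₁ + B₂) * (C₁ + C₂) ^ n * gdeg m := by ring
  · refine mem_of_gbound (B := B₁ * B₂) (C := 2 * 2 ^ M * (C₁ + C₂))
      (by positivity) (by positivity) ?_
    intro d z hz
    have hz0 : z ≠ 0 := fun h => by simp [h] at hz
    set n := ∑ a, d a with hn
    set m := ∑ a, ν a * (d a : ℤ) with hm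
    set s := Fintype.piFinset (fun i => Finset.range (d i + 1)) with hs
    have hterm : ∀ x ∈ s, ‖laurentEval (A x * B (fun i => d i - x i)) z‖
        ≤ (B₁ * B₂) * ((C₁ + C₂) ^ n) * (2 ^ (M * n) * gdeg m) := by
      intro x hxs
      have hx : ∀ i, x i ≤ d i := by
        intro i
        have := Fintype.mem_piFinset.mp hxs i
        rw [Finset.mem_range] at this; omega
      set y : Fin r → ℕ := fun i => d i - x i with hy
      set n₁ := ∑ a, x a with hn₁
      set n₂ := ∑ a, y a with hn₂
      set m₁ := ∑ a, ν a * (x a : ℤ) with hm₁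
      set m₂ := ∑ a, ν a * (y a : ℤ) with hm₂
      have hnsplit : n₁ + n₂ = n := by
        rw [hn₁, hn₂, hn, ← Finset.sum_add_distrib]
        exact Finset.sum_congr rfl fun a _ => by have := hx a; simp only [hy]; omega
      have hmsplit : m₁ + m₂ = m := by
        rw [hm₁, hm₂, hm, ← Finset.sum_add_distrib]
        refine Finset.sum_congr rfl fun a _ => ?_
        have : ((y a : ℤ)) = (d a : ℤ) - (x a : ℤ) := by
          have := hx a; simp only [hy]; omega
        rw [this]; ring
      have habs1 : m₁.natAbs ≤ M * n₁ := by
        calc m₁.natAbs ≤ ∑ a, (ν a * (x a : ℤ)).natAbs := natAbs_sum_le _ _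
          _ = ∑ a, (ν a).natAbs * x a := by
              refine Finset.sum_congr rfl fun a _ => ?_
              rw [Int.natAbs_mul, Int.natAbs_natCast]
          _ ≤ ∑ a, M * x a := by
              refine Finset.sum_le_sum fun a _ => Nat.mul_le_mul_right _ ?_
              rw [hM]
              exact Finset.single_le_sum (f := fun b => (ν b).natAbs)
                (fun _ _ => Nat.zero_le _) (Finset.mem_univ a)
          _ = M * n₁ := by rw [← Finset.mul_sum]
      have habs2 : m₂.natAbs ≤ M * n₂ := by
        calc m₂.natAbs ≤ ∑ a, (ν a * (y a : ℤ)).natAbs := natAbs_sum_le _ _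
          _ = ∑ a, (ν a).natAbs * y a := by
              refine Finset.sum_congr rfl fun a _ => ?_
              rw [Int.natAbs_mul, Int.natAbs_natCast]
          _ ≤ ∑ a, M * y a := by
              refine Finset.sum_le_sum fun a _ => Nat.mul_le_mul_right _ ?_
              rw [hM]
              exact Finset.single_le_sum (f := fun b => (ν b).natAbs)
                (fun _ _ => Nat.zero_le _) (Finset.mem_univ a)
          _ = M * n₂ := by rw [← Finset.mul_sum]
      have hCpow : C₁ ^ n₁ * C₂ ^ n₂ ≤ (C₁ + C₂) ^ n := by
        rw [← hnsplit, pow_add]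
        exact mul_le_mul (pow_le_pow_left₀ hC₁.le (by linarith) _)
          (pow_le_pow_left₀ hC₂.le (by linarith) _) (by positivity) (by positivity)
      have hgd : gdeg m₁ * gdeg m₂ ≤ 2 ^ (M * n) * gdeg m := by
        refine le_trans (gdeg_mul_le m₁ m₂) ?_
        rw [hmsplit]
        refine mul_le_mul_of_nonneg_right ?_ (gdeg_pos m).le
        exact pow_le_pow_right₀ one_le_two (by
          calc m₁.natAbs + m₂.natAbs ≤ M * n₁ + M * n₂ := by omega
            _ = M * n := by rw [← Nat.mul_add, hnsplit])
      have hmul : laurentEval (A x * B y) z = laurentEval (A x) z * laurentEval (B y) z := by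
        rw [← laurentEvalHom_apply z hz0, ← laurentEvalHom_apply z hz0,
          ← laurentEvalHom_apply z hz0, map_mul]
      calc ‖laurentEval (A x * B y) z‖
          = ‖laurentEval (A x) z‖ * ‖laurentEval (B y) z‖ := by
            rw [hmul, norm_mul]
        _ ≤ (B₁ * C₁ ^ n₁ * gdeg m₁) * (B₂ * C₂ ^ n₂ * gdeg m₂) :=
            mul_le_mul (h₁ x z hz) (h₂ y z hz) (norm_nonneg _)
              (mul_nonneg (by positivity) (gdeg_pos m₁).le)
        _ = (B₁ * B₂) * (C₁ ^ n₁ * C₂ ^ n₂) * (gdeg m₁ * gdeg m₂) := by ring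
        _ ≤ (B₁ * B₂) * ((C₁ + C₂) ^ n) * (2 ^ (M * n) * gdeg m) := by
            refine mul_le_mul (mul_le_mul_of_nonneg_left hCpow (by positivity)) hgd
              (mul_nonneg (gdeg_pos m₁).le (gdeg_pos m₂).le) (by positivity)
    have hcard : (s.card : ℝ) ≤ 2 ^ n := by
      have : s.card = ∏ i, (d i + 1) := by
        rw [hs, Fintype.card_piFinset]
        exact Finset.prod_congr rfl fun i _ => by rw [Finset.card_range]
      have h2 : ∏ i, (d i + 1) ≤ 2 ^ n := by
        rw [hn, ← Finset.prod_pow_eq_pow_sum]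
        exact Finset.prod_le_prod' fun i _ => Nat.lt_two_pow_self
      calc (s.card : ℝ) = ((∏ i, (d i + 1) : ℕ) : ℝ) := by rw [this]
        _ ≤ ((2 ^ n : ℕ) : ℝ) := Nat.cast_le.2 h2
        _ = 2 ^ n := by push_cast; ring
    have hsum : laurentEval (cauchyProdL r A B d) z
        = ∑ x ∈ s, laurentEval (A x * B (fun i => d i - x i)) z := by
      rw [← laurentEvalHom_apply z hz0, cauchyProdL, map_sum]
      exact Finset.sum_congr rfl fun x _ => laurentEvalHom_apply z hz0 _
    calc ‖laurentEval (cauchyProdL r A B d) z‖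
        ≤ ∑ x ∈ s, ‖laurentEval (A x * B (fun i => d i - x i)) z‖ := by
          rw [hsum]; exact norm_sum_le _ _
      _ ≤ s.card • ((B₁ * B₂) * ((C₁ + C₂) ^ n) * (2 ^ (M * n) * gdeg m)) :=
          Finset.sum_le_card_nsmul s _ _ hterm
      _ = (s.card : ℝ) * ((B₁ * B₂) * ((C₁ + C₂) ^ n) * (2 ^ (M * n) * gdeg m)) := by
          rw [nsmul_eq_mul]
      _ ≤ 2 ^ n * ((B₁ * B₂) * ((C₁ + C₂) ^ n) * (2 ^ (M * n) * gdeg m)) := by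
          refine mul_le_mul_of_nonneg_right hcard ?_
          have := (gdeg_pos m).le; positivity
      _ = (B₁ * B₂) * (2 * 2 ^ M * (C₁ + C₂)) ^ n * gdeg m := by
          rw [mul_pow, mul_pow, ← pow_mul]; ring
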